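/- Let H be a quasi-Hopf algebra with bijective antipode S, associator Φ, Drinfel'd twist f = f¹⊗f² with inverse f⁻¹ = g¹⊗g², q_R = q¹⊗q² = X¹ ⊗ S⁻¹(αX³)X², and U := g¹S(q²) ⊗ g²S(q¹) ∈ H⊗H. Then for all h ∈ H: U·(1 ⊗ S(h)) = Δ(S(h₁))·U·(h₂ ⊗ 1). -/

import Mathlib

open TensorProduct

noncomputable section

/-- A quasi-Hopf algebra structure (Drinfel'd) on a `k`-algebra `H`:
an algebra-map coproduct `comul`, an algebra-map counit, an invertible
associator `assoc ∈ H⊗H⊗H`, elements `α, β` and an anti-multiplicative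
antipode, satisfying (2.1)–(2.6) of the paper. -/
structure QuasiHopfAlgebra (k H : Type*) [CommRing k] [Ring H] [Algebra k H] where
  /-- the coproduct, an algebra map `H → H ⊗ H` -/
  comul : H →ₐ[k] H ⊗[k] H
  /-- the counit, an algebra map `H → k` -/
  counit : H →ₐ[k] k
  /-- the associator `Φ` -/
  assoc : H ⊗[k] (H ⊗[k] H)
  /-- the inverse `Φ⁻¹` of the associator -/
  assocInv : H ⊗[k] (H ⊗[k] H)
  /-- the antipode `S` -/
  antipode : H →ₗ[k] H
  /-- the element `α` -/
  alpha : H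
  /-- the element `β` -/
  beta : H
  antipode_one : antipode 1 = 1
  antipode_mul : ∀ a b : H, antipode (a * b) = antipode b * antipode a
  assoc_mul_inv : assoc * assocInv = 1
  inv_mul_assoc : assocInv * assoc = 1
  /-- (2.1): quasi-coassociativity `(id ⊗ Δ)Δ(h) = Φ ((Δ ⊗ id)Δ(h)) Φ⁻¹` -/
  quasi_coassoc : ∀ h : H,
    TensorProduct.map LinearMap.id comul.toLinearMap (comul h)
      = assoc * (TensorProduct.assoc k H H H)
          (TensorProduct.map comul.toLinearMap LinearMap.id (comul h)) * assocInv
  /-- (2.2): left counit axiom -/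
  counit_comul : ∀ h : H,
    (TensorProduct.lid k H) (TensorProduct.map counit.toLinearMap LinearMap.id (comul h)) = h
  /-- (2.2): right counit axiom -/
  comul_counit : ∀ h : H,
    (TensorProduct.rid k H) (TensorProduct.map LinearMap.id counit.toLinearMap (comul h)) = h
  /-- (2.3): the pentagon axiom
  `(1 ⊗ Φ)·((id ⊗ Δ ⊗ id)Φ)·(Φ ⊗ 1) = ((id ⊗ id ⊗ Δ)Φ)·((Δ ⊗ id ⊗ id)Φ)` -/
  pentagon :
    ((1 : H) ⊗ₜ[k] assoc)
      * (TensorProduct.map LinearMap.id (TensorProduct.assoc k H H H).toLinearMap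
          (TensorProduct.map LinearMap.id
            (TensorProduct.map comul.toLinearMap LinearMap.id) assoc))
      * (TensorProduct.map LinearMap.id (TensorProduct.assoc k H H H).toLinearMap
          ((TensorProduct.assoc k H (H ⊗[k] H) H) (assoc ⊗ₜ[k] (1 : H))))
    = (TensorProduct.map LinearMap.id
          (TensorProduct.map LinearMap.id comul.toLinearMap) assoc)
      * ((TensorProduct.assoc k H H (H ⊗[k] H))
          (TensorProduct.map comul.toLinearMap LinearMap.id assoc))
  /-- (2.4): `(id ⊗ ε ⊗ id)(Φ) = 1 ⊗ 1` -/
  counit_assoc :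
    TensorProduct.map LinearMap.id
      ((TensorProduct.lid k H).toLinearMap ∘ₗ
        TensorProduct.map counit.toLinearMap LinearMap.id) assoc = 1
  /-- (2.5): `Σ S(h₁) α h₂ = ε(h) α` -/
  antipode_left : ∀ h : H,
    LinearMap.mul' k H
      (TensorProduct.map (LinearMap.mulRight k alpha ∘ₗ antipode) LinearMap.id (comul h))
      = counit h • alpha
  /-- (2.5): `Σ h₁ β S(h₂) = ε(h) β` -/
  antipode_right : ∀ h : H,
    LinearMap.mul' k H
      (TensorProduct.map LinearMap.id (LinearMap.mulLeft k beta ∘ₗ antipode) (comul h))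
      = counit h • beta
  /-- (2.6): `X¹ β S(X²) α X³ = 1` -/
  assoc_antipode_left :
    LinearMap.mul' k H
      (TensorProduct.map LinearMap.id
        (LinearMap.mul' k H ∘ₗ
          TensorProduct.map
            (LinearMap.mulRight k alpha ∘ₗ LinearMap.mulLeft k beta ∘ₗ antipode)
            LinearMap.id)
        assoc) = 1
  /-- (2.6): `S(x¹) α x² β S(x³) = 1` -/
  assoc_antipode_right :
    LinearMap.mul' k H
      (TensorProduct.map antipode
        (LinearMap.mul' k H ∘ₗ
          TensorProduct.map
            (LinearMap.mulRight k beta ∘ₗ LinearMap.mulLeft k alpha)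
            antipode)
        assocInv) = 1

variable {k H : Type*} [CommRing k] [Ring H] [Algebra k H]

/-- `q_R = X¹ ⊗ S⁻¹(αX³)X²`, built from the associator. -/
def qR (Q : QuasiHopfAlgebra k H) (Sinv : H →ₗ[k] H) : H ⊗[k] H :=
  TensorProduct.map LinearMap.id
    (TensorProduct.lift (LinearMap.mk₂ k (fun x2 x3 => Sinv (Q.alpha * x3) * x2)
      (fun x2 x2' x3 => by simp [mul_add])
      (fun c x2 x3 => by simp [mul_smul_comm])
      (fun x2 x3 x3' => by simp [mul_add, map_add, add_mul])
      (fun c x2 x3 => by simp [mul_smul_comm, map_smul, smul_mul_assoc])))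
    Q.assoc

/-- `U = g¹S(q²) ⊗ g²S(q¹) = f⁻¹ · (S ⊗ S)(swap q_R)`. -/
def Uel (Q : QuasiHopfAlgebra k H) (Sinv : H →ₗ[k] H) (g : H ⊗[k] H) : H ⊗[k] H :=
  g * TensorProduct.map Q.antipode Q.antipode ((TensorProduct.comm k H H) (qR Q Sinv))

/-- The right-hand side `Σ Δ(S(h₁)) · U · (h₂ ⊗ 1)` as a linear map in `h₁ ⊗ h₂`. -/
def rhs12 (Q : QuasiHopfAlgebra k H) (U : H ⊗[k] H) : H ⊗[k] H →ₗ[k] H ⊗[k] H :=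
  TensorProduct.lift (LinearMap.mk₂ k
    (fun h1 h2 => Q.comul (Q.antipode h1) * U * (h2 ⊗ₜ[k] (1 : H)))
    (fun h1 h1' h2 => by simp [map_add, add_mul])
    (fun c h1 h2 => by simp [map_smul, smul_mul_assoc])
    (fun h1 h2 h2' => by simp [TensorProduct.add_tmul, mul_add])
    (fun c h1 h2 => by
      rw [show ((c • h2) ⊗ₜ[k] (1 : H)) = c • (h2 ⊗ₜ[k] (1 : H)) from (TensorProduct.smul_tmul' c h2 1).symm, mul_smul_comm]))

section Stmt12Aux

variable (Q : QuasiHopfAlgebra k H) (Sinv : H →ₗ[k] H)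

/-- `G(x2 ⊗ x3) = S⁻¹(α x3) x2`, the second-leg map used in `qR`. -/
def Gm : H ⊗[k] H →ₗ[k] H :=
  TensorProduct.lift (LinearMap.mk₂ k (fun x2 x3 => Sinv (Q.alpha * x3) * x2)
    (fun x2 x2' x3 => by simp [mul_add])
    (fun c x2 x3 => by simp [mul_smul_comm])
    (fun x2 x3 x3' => by simp [mul_add, map_add, add_mul])
    (fun c x2 x3 => by simp [mul_smul_comm, map_smul, smul_mul_assoc]))

lemma qR_eq : qR Q Sinv = TensorProduct.map LinearMap.id (Gm Q Sinv) Q.assoc := rfl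

/-- `Mz z (q ⊗ r) = S⁻¹(r) z q`. -/
def Mz (z : H) : H ⊗[k] H →ₗ[k] H :=
  TensorProduct.lift (LinearMap.mk₂ k (fun q r => Sinv r * z * q)
    (fun q q' r => by simp [mul_add])
    (fun c q r => by simp [mul_smul_comm])
    (fun q r r' => by simp [map_add, add_mul])
    (fun c q r => by simp [map_smul, smul_mul_assoc]))

/-- `Mm (h1 ⊗ h2) = (1 ⊗ S⁻¹(h2)) · qR · Δ(h1)`. -/
def Mm : H ⊗[k] H →ₗ[k] H ⊗[k] H :=
  TensorProduct.lift (LinearMap.mk₂ k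
    (fun h1 h2 => ((1:H) ⊗ₜ[k] Sinv h2) * qR Q Sinv * Q.comul h1)
    (fun h1 h1' h2 => by simp [map_add, mul_add])
    (fun c h1 h2 => by simp [map_smul, mul_smul_comm])
    (fun h1 h2 h2' => by simp [map_add, TensorProduct.tmul_add, add_mul])
    (fun c h1 h2 => by simp [map_smul, TensorProduct.tmul_smul, smul_mul_assoc]))

lemma sinv_one (hS1 : ∀ a : H, Sinv (Q.antipode a) = a) : Sinv 1 = 1 := by
  have := hS1 1
  rwa [Q.antipode_one] at this

lemma sinv_mul (hS1 : ∀ a : H, Sinv (Q.antipode a) = a)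
    (hS2 : ∀ a : H, Q.antipode (Sinv a) = a) (x y : H) : Sinv (x * y) = Sinv y * Sinv x := by
  have := hS1 (Sinv y * Sinv x)
  rwa [Q.antipode_mul, hS2, hS2] at this

/-- `(S ⊗ S) ∘ swap` is an anti-algebra map. -/
lemma T_anti (u v : H ⊗[k] H) :
    TensorProduct.map Q.antipode Q.antipode ((TensorProduct.comm k H H) (u * v))
      = TensorProduct.map Q.antipode Q.antipode ((TensorProduct.comm k H H) v)
        * TensorProduct.map Q.antipode Q.antipode ((TensorProduct.comm k H H) u) := by
  induction u using TensorProduct.induction_on with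
  | zero => simp
  | add x y hx hy => simp [add_mul, mul_add, map_add, hx, hy]
  | tmul a b =>
    induction v using TensorProduct.induction_on with
    | zero => simp
    | add x y hx hy => simp [add_mul, mul_add, map_add, hx, hy]
    | tmul c d =>
      simp [Algebra.TensorProduct.tmul_mul_tmul, Q.antipode_mul]

lemma lemA' (hS1 : ∀ a : H, Sinv (Q.antipode a) = a)
    (hS2 : ∀ a : H, Q.antipode (Sinv a) = a) (φ : H ⊗[k] (H ⊗[k] H)) (c : H ⊗[k] H) (b : H) :
    ((1:H) ⊗ₜ[k] Sinv b) * (TensorProduct.map LinearMap.id (Gm Q Sinv) φ) * c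
      = TensorProduct.map LinearMap.id (Gm Q Sinv)
          (φ * (TensorProduct.assoc k H H H) (c ⊗ₜ[k] b)) := by
  induction φ using TensorProduct.induction_on with
  | zero => simp
  | add x y hx hy => simp [add_mul, mul_add, map_add, hx, hy]
  | tmul p w =>
    induction w using TensorProduct.induction_on with
    | zero => simp
    | add x y hx hy =>
      simp only [TensorProduct.tmul_add, map_add, add_mul, mul_add] at hx hy ⊢
      rw [hx, hy]
    | tmul q r =>
      induction c using TensorProduct.induction_on with
      | zero => simp
      | add x y hx hy =>
        simp only [TensorProduct.add_tmul, map_add, mul_add, hx, hy]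
      | tmul u v =>
        simp [Gm, Algebra.TensorProduct.tmul_mul_tmul,
          sinv_mul Q Sinv hS1 hS2, mul_assoc]

lemma lemC (hS1 : ∀ a : H, Sinv (Q.antipode a) = a)
    (hS2 : ∀ a : H, Q.antipode (Sinv a) = a) (a : H) (c : H ⊗[k] H) (φ : H ⊗[k] (H ⊗[k] H)) :
    TensorProduct.map LinearMap.id (Gm Q Sinv) ((a ⊗ₜ[k] c) * φ)
      = TensorProduct.map (LinearMap.mulLeft k a) (Mz Sinv (Gm Q Sinv c)) φ := by
  induction φ using TensorProduct.induction_on with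
  | zero => simp
  | add x y hx hy => simp [mul_add, map_add, hx, hy]
  | tmul p w =>
    induction w using TensorProduct.induction_on with
    | zero => simp
    | add x y hx hy =>
      simp only [TensorProduct.tmul_add, map_add, mul_add] at hx hy ⊢
      rw [hx, hy]
    | tmul q r =>
      induction c using TensorProduct.induction_on with
      | zero => simp [Gm, Mz]
      | add x y hx hy =>
        simp only [TensorProduct.tmul_add, TensorProduct.add_tmul, map_add, add_mul,
          mul_add, LinearMap.add_apply] at hx hy ⊢
        rw [hx, hy]
        simp [Mz, Gm, add_mul, mul_add, TensorProduct.tmul_add]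
      | tmul u v =>
        simp [Gm, Mz, Algebra.TensorProduct.tmul_mul_tmul,
          sinv_mul Q Sinv hS1 hS2, mul_assoc]

lemma scalarMz (t : k) (z : H) (fmap : H →ₗ[k] H) (φ : H ⊗[k] (H ⊗[k] H)) :
    TensorProduct.map fmap (Mz Sinv (t • z)) φ
      = t • TensorProduct.map fmap (Mz Sinv z) φ := by
  induction φ using TensorProduct.induction_on with
  | zero => simp
  | add x y hx hy => simp [map_add, smul_add, hx, hy]
  | tmul p w =>
    induction w using TensorProduct.induction_on with
    | zero => simp
    | add x y hx hy =>
      simp only [TensorProduct.tmul_add, map_add, smul_add] at hx hy ⊢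
      rw [hx, hy]
    | tmul q r =>
      simp [Mz, mul_smul_comm, smul_mul_assoc, TensorProduct.tmul_smul]

lemma lemE (hS1 : ∀ a : H, Sinv (Q.antipode a) = a)
    (hS2 : ∀ a : H, Q.antipode (Sinv a) = a) (a : H) (φ : H ⊗[k] (H ⊗[k] H)) :
    (a ⊗ₜ[k] (1:H)) * TensorProduct.map LinearMap.id (Gm Q Sinv) φ
      = TensorProduct.map (LinearMap.mulLeft k a) (Mz Sinv (Sinv Q.alpha)) φ := by
  induction φ using TensorProduct.induction_on with
  | zero => simp
  | add x y hx hy => simp [mul_add, map_add, hx, hy]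
  | tmul p w =>
    induction w using TensorProduct.induction_on with
    | zero => simp
    | add x y hx hy =>
      simp only [TensorProduct.tmul_add, map_add, mul_add] at hx hy ⊢
      rw [hx, hy]
    | tmul q r =>
      simp [Gm, Mz, Algebra.TensorProduct.tmul_mul_tmul,
        sinv_mul Q Sinv hS1 hS2, mul_assoc]

lemma G_comul (hS1 : ∀ a : H, Sinv (Q.antipode a) = a)
    (hS2 : ∀ a : H, Q.antipode (Sinv a) = a) (b : H) :
    Gm Q Sinv (Q.comul b) = Q.counit b • Sinv Q.alpha := by
  have key : ∀ c : H ⊗[k] H,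
      Sinv (LinearMap.mul' k H
        (TensorProduct.map (LinearMap.mulRight k Q.alpha ∘ₗ Q.antipode) LinearMap.id c))
        = Gm Q Sinv c := by
    intro c
    induction c using TensorProduct.induction_on with
    | zero => simp
    | add x y hx hy => simp [map_add, hx, hy]
    | tmul u v =>
      simp [Gm, LinearMap.mul'_apply, sinv_mul Q Sinv hS1 hS2, hS1, mul_assoc]
  rw [← key, Q.antipode_left b, map_smul]

lemma lemKey (hS1 : ∀ a : H, Sinv (Q.antipode a) = a)
    (hS2 : ∀ a : H, Q.antipode (Sinv a) = a) (h : H) :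
    Mm Q Sinv (Q.comul h) = (h ⊗ₜ[k] (1:H)) * qR Q Sinv := by
  have hF : ∀ x : H ⊗[k] H,
      Mm Q Sinv x
        = TensorProduct.map LinearMap.id (Gm Q Sinv)
            (Q.assoc * (TensorProduct.assoc k H H H)
              (TensorProduct.map Q.comul.toLinearMap LinearMap.id x)) := by
    intro x
    induction x using TensorProduct.induction_on with
    | zero => simp
    | add x y hx hy => simp [map_add, mul_add, hx, hy]
    | tmul h1 h2 =>
      have := lemA' Q Sinv hS1 hS2 Q.assoc (Q.comul h1) h2
      rw [← qR_eq] at this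
      simpa [Mm] using this
  have hB : Q.assoc * (TensorProduct.assoc k H H H)
        (TensorProduct.map Q.comul.toLinearMap LinearMap.id (Q.comul h))
      = TensorProduct.map LinearMap.id Q.comul.toLinearMap (Q.comul h) * Q.assoc := by
    rw [Q.quasi_coassoc h, mul_assoc, Q.inv_mul_assoc, mul_one]
  have hD : ∀ x : H ⊗[k] H,
      TensorProduct.map LinearMap.id (Gm Q Sinv)
          ((TensorProduct.map LinearMap.id Q.comul.toLinearMap x) * Q.assoc)
        = (((TensorProduct.rid k H)
              (TensorProduct.map LinearMap.id Q.counit.toLinearMap x)) ⊗ₜ[k] (1:H))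
            * qR Q Sinv := by
    intro x
    induction x using TensorProduct.induction_on with
    | zero => simp
    | add x y hx hy =>
      simp [map_add, add_mul, TensorProduct.add_tmul, hx, hy]
    | tmul a b =>
      have e1 : TensorProduct.map LinearMap.id Q.comul.toLinearMap (a ⊗ₜ[k] b)
          = a ⊗ₜ[k] Q.comul b := by simp
      rw [e1, lemC Q Sinv hS1 hS2, G_comul Q Sinv hS1 hS2, scalarMz,
        ← lemE Q Sinv hS1 hS2, ← qR_eq]
      simp only [TensorProduct.rid_tmul, LinearMap.id_coe, id_eq, TensorProduct.map_tmul,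
        AlgHom.toLinearMap_apply]
      rw [show (Q.counit b • a) ⊗ₜ[k] (1:H) = Q.counit b • (a ⊗ₜ[k] (1:H)) from
        (TensorProduct.smul_tmul' _ _ _).symm, smul_mul_assoc]
  rw [hF (Q.comul h), hB, hD (Q.comul h), Q.comul_counit h]

end Stmt12Aux

/-- for a quasi-Hopf algebra `H` with bijective antipode and
Drinfel'd twist `f` (with inverse `g`), the element `U = g¹S(q²) ⊗ g²S(q¹)`
satisfies `U·(1 ⊗ S(h)) = Δ(S(h₁))·U·(h₂ ⊗ 1)` for all `h ∈ H`. -/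
theorem stmt_12 (Q : QuasiHopfAlgebra k H) (Sinv : H →ₗ[k] H)
    (hS1 : ∀ a : H, Sinv (Q.antipode a) = a)
    (hS2 : ∀ a : H, Q.antipode (Sinv a) = a)
    (f g : H ⊗[k] H) (hfg : f * g = 1) (hgf : g * f = 1)
    (htwist : ∀ h : H,
      f * Q.comul (Q.antipode h) * g
        = TensorProduct.map Q.antipode Q.antipode
            ((TensorProduct.comm k H H) (Q.comul h))) :
    ∀ h : H,
      Uel Q Sinv g * ((1 : H) ⊗ₜ[k] Q.antipode h)
        = rhs12 Q (Uel Q Sinv g) (Q.comul h) := by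
  intro h
  have hq : Uel Q Sinv g
      = g * TensorProduct.map Q.antipode Q.antipode
          ((TensorProduct.comm k H H) (qR Q Sinv)) := rfl
  have h1 : ((1 : H) ⊗ₜ[k] Q.antipode h)
      = TensorProduct.map Q.antipode Q.antipode
          ((TensorProduct.comm k H H) (h ⊗ₜ[k] (1:H))) := by
    simp [Q.antipode_one]
  rw [hq, h1, mul_assoc, ← T_anti Q, ← lemKey Q Sinv hS1 hS2 h]
  have main : ∀ x : H ⊗[k] H,
      g * TensorProduct.map Q.antipode Q.antipode
          ((TensorProduct.comm k H H) (Mm Q Sinv x))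
        = rhs12 Q (Uel Q Sinv g) x := by
    intro x
    induction x using TensorProduct.induction_on with
    | zero => simp
    | add x y hx hy => simp [map_add, mul_add, hx, hy]
    | tmul a b =>
      have e1 : Mm Q Sinv (a ⊗ₜ[k] b)
          = ((1:H) ⊗ₜ[k] Sinv b) * qR Q Sinv * Q.comul a := by simp [Mm]
      have e2 : TensorProduct.map Q.antipode Q.antipode
          ((TensorProduct.comm k H H) ((1:H) ⊗ₜ[k] Sinv b)) = b ⊗ₜ[k] (1:H) := by
        simp [hS2, Q.antipode_one]
      rw [e1, T_anti Q, T_anti Q, e2, ← htwist a]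
      have e3 : rhs12 Q (Uel Q Sinv g) (a ⊗ₜ[k] b)
          = Q.comul (Q.antipode a) * Uel Q Sinv g * (b ⊗ₜ[k] (1:H)) := by
        simp [rhs12]
      rw [e3, hq]
      simp only [← mul_assoc]
      rw [hgf, one_mul]
  exact main (Q.comul h)


end
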